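/- Let A = ℤ/2ℤ viewed as a vector space over the field with two elements, let G = ℤ, and let M = {-1, 0} ⊆ ℤ. Define s : ℤ → L(A^M, A) by s(n)(u,v) = v for n ≤ 0 and s(n)(u,v) = u + v for n ≥ 1, where (u,v) denotes (coordinate at -1, coordinate at 0); thus σ_s(x)(n) = x(n) for n ≤ 0 and σ_s(x)(n) = x(n-1) + x(n) for n ≥ 1. Then: (a) σ_s : A^ℤ → A^ℤ is bijective but not post-surjective; (b) the dual linear NUCA σ_{s*} : (A*)^ℤ → (A*)^ℤ is pre-injective and post-surjective but not injective. -/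
import Mathlib


open scoped BigOperators Pointwise

/-- The linear NUCA over the universe `ℤ` (written additively) with memory
`M ⊆ ℤ` and configuration of local defining maps `s` in coefficient form:
`σ_s(x)(n) = ∑_{m ∈ M} s(n,m)(x(n+m))`. -/
def nucaMapZ {V : Type*} [AddCommGroup V] [Module (ZMod 2) V]
    (M : Finset ℤ) (s : ℤ → ℤ → (V →ₗ[ZMod 2] V)) (x : ℤ → V) : ℤ → V :=
  fun g => ∑ m ∈ M, s g m (x (g + m))

/-- Two configurations are asymptotic if they agree outside a finite set. -/
def Asymptotic {G A : Type*} (x y : G → A) : Prop :=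
  Set.Finite {g : G | x g ≠ y g}

/-- Pre-injectivity. -/
def PreInjective {G V : Type*} (σ : (G → V) → (G → V)) : Prop :=
  ∀ x y : G → V, Asymptotic x y → σ x = σ y → x = y

/-- Post-surjectivity. -/
def PostSurjective {G V : Type*} (σ : (G → V) → (G → V)) : Prop :=
  ∀ x y : G → V, Asymptotic y (σ x) → ∃ z : G → V, Asymptotic z x ∧ σ z = y

/-- The dual configuration `s*` in coefficient form (additive universe `ℤ`):
`s*(g,m) = (s(g+m, -m))ᵀ`, the transpose (dual map) of `s(g+m, -m)`. -/
def dualCoeffZ {V : Type*} [AddCommGroup V] [Module (ZMod 2) V]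
    (s : ℤ → ℤ → (V →ₗ[ZMod 2] V)) :
    ℤ → ℤ → (Module.Dual (ZMod 2) V →ₗ[ZMod 2] Module.Dual (ZMod 2) V) :=
  fun g m => (s (g + m) (-m)).dualMap

/-- The configuration of local defining maps with `s(n)(u,v) = v` for `n ≤ 0` and
`s(n)(u,v) = u + v` for `n ≥ 1`, where `(u,v)` = (coordinate at `-1`, coordinate
at `0`); i.e. the coefficient `s(n,m)` is the identity exactly when `m = 0`, or
when `n ≥ 1` and `m = -1`. -/
def sEx : ℤ → ℤ → (ZMod 2 →ₗ[ZMod 2] ZMod 2) :=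
  fun n m =>
    if n ≤ 0 then (if m = 0 then LinearMap.id else 0)
    else (if m = 0 ∨ m = -1 then LinearMap.id else 0)

section helpers
variable {V : Type*} [AddCommGroup V] [Module (ZMod 2) V]

lemma two_torsion (a : V) : a + a = 0 := by
  have h : a + a = (2 : ZMod 2) • a := by rw [two_smul]
  rw [h, show (2 : ZMod 2) = 0 by decide, zero_smul]

lemma char2_eq_of_add_eq_zero {a b : V} (h : a + b = 0) : a = b := by
  have := two_torsion b
  calc a = a + (b + b) := by rw [this, add_zero]
    _ = (a + b) + b := by rw [add_assoc]
    _ = b := by rw [h, zero_add]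

lemma nuca_add (M : Finset ℤ) (s : ℤ → ℤ → (V →ₗ[ZMod 2] V)) (x y : ℤ → V) :
    nucaMapZ M s (x + y) = nucaMapZ M s x + nucaMapZ M s y := by
  funext g
  simp [nucaMapZ, Finset.sum_add_distrib]

lemma nuca_zero (M : Finset ℤ) (s : ℤ → ℤ → (V →ₗ[ZMod 2] V)) :
    nucaMapZ M s 0 = 0 := by
  funext g; simp [nucaMapZ]

end helpers

lemma nucaA_eq (x : ℤ → ZMod 2) (g : ℤ) :
    nucaMapZ ({-1, 0} : Finset ℤ) sEx x g =
      if g ≤ 0 then x g else x (g - 1) + x g := by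
  rw [nucaMapZ, Finset.sum_insert (by decide), Finset.sum_singleton]
  by_cases h : g ≤ 0 <;> simp [sEx, h, sub_eq_add_neg]

lemma negset : (-({-1, 0} : Finset ℤ)) = ({0, 1} : Finset ℤ) := by
  ext a; simp [Finset.mem_neg]; omega

lemma dualMap_zero' {V : Type*} [AddCommGroup V] [Module (ZMod 2) V] :
    ((0 : V →ₗ[ZMod 2] V)).dualMap = 0 := by
  ext φ v; simp

lemma nucaB_eq (ω : ℤ → Module.Dual (ZMod 2) (ZMod 2)) (g : ℤ) :
    nucaMapZ (-({-1, 0} : Finset ℤ)) (dualCoeffZ sEx) ω g =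
      if g < 0 then ω g else ω g + ω (g + 1) := by
  rw [negset, nucaMapZ, Finset.sum_insert (by decide), Finset.sum_singleton]
  by_cases h : g < 0
  · have h1 : g + 1 ≤ 0 := by omega
    simp [dualCoeffZ, sEx, h, h1, show g ≤ 0 by omega, dualMap_zero']
  · have h1 : ¬ (g + 1 ≤ 0) := by omega
    by_cases h0 : g ≤ 0 <;> simp [dualCoeffZ, sEx, h, h1, h0, dualMap_zero']

noncomputable def invA (y : ℤ → ZMod 2) : ℤ → ZMod 2 :=
  fun n => if n < 0 then y n else ∑ k ∈ Finset.range (n.toNat + 1), y (k : ℤ)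

lemma invA_nonneg (y : ℤ → ZMod 2) {n : ℤ} (hn : 0 ≤ n) :
    invA y n = ∑ k ∈ Finset.range (n.toNat + 1), y (k : ℤ) := by
  simp [invA, not_lt.mpr hn]

lemma left_inv_A (x : ℤ → ZMod 2) : invA (nucaMapZ ({-1, 0} : Finset ℤ) sEx x) = x := by
  set σx := nucaMapZ ({-1, 0} : Finset ℤ) sEx x with hσ
  have key : ∀ m : ℕ, ∑ k ∈ Finset.range (m + 1), σx (k : ℤ) = x (m : ℤ) := by
    intro m
    induction m with
    | zero => simp [hσ, nucaA_eq]
    | succ m ih =>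
      rw [Finset.sum_range_succ, ih]
      have h1 : σx ((m : ℤ) + 1) = x (m : ℤ) + x ((m : ℤ) + 1) := by
        rw [hσ, nucaA_eq]
        have : ¬ ((m : ℤ) + 1 ≤ 0) := by omega
        simp [this]
      push_cast
      rw [h1, ← add_assoc, two_torsion, zero_add]
  funext n
  by_cases hn : n < 0
  · simp [invA, hn, hσ, nucaA_eq, show n ≤ 0 by omega]
  · push_neg at hn
    rw [invA_nonneg _ hn, key, Int.toNat_of_nonneg hn]

lemma right_inv_A (y : ℤ → ZMod 2) : nucaMapZ ({-1, 0} : Finset ℤ) sEx (invA y) = y := by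
  funext n
  rw [nucaA_eq]
  by_cases hn : n ≤ 0
  · rw [if_pos hn]
    rcases lt_or_eq_of_le hn with h | h
    · simp [invA, h]
    · subst h; simp [invA]
  · rw [if_neg hn]
    push_neg at hn
    have h1 : (0:ℤ) ≤ n - 1 := by omega
    have h0 : (0:ℤ) ≤ n := by omega
    rw [invA_nonneg _ h1, invA_nonneg _ h0]
    have ht : n.toNat = (n - 1).toNat + 1 := by omega
    rw [ht, Finset.sum_range_succ (fun k => y (k : ℤ)) ((n - 1).toNat + 1),
      ← add_assoc, two_torsion, zero_add]
    congr 1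
    omega

lemma bijA : Function.Bijective (nucaMapZ ({-1, 0} : Finset ℤ) sEx) :=
  Function.bijective_iff_has_inverse.mpr ⟨invA, fun x => left_inv_A x, fun y => right_inv_A y⟩

lemma notPostA : ¬ PostSurjective (nucaMapZ ({-1, 0} : Finset ℤ) sEx) := by
  intro H
  set y : ℤ → ZMod 2 := fun n => if n = 1 then 1 else 0 with hy
  have h0 : nucaMapZ ({-1, 0} : Finset ℤ) sEx (0 : ℤ → ZMod 2) = 0 := nuca_zero _ _
  obtain ⟨z, hz, hσz⟩ := H 0 y (by
    apply Set.Finite.subset (Set.finite_singleton (1 : ℤ))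
    intro g hg
    simp only [Asymptotic, Set.mem_setOf_eq, h0, Pi.zero_apply, hy] at hg
    by_contra hg1
    simp only [Set.mem_singleton_iff] at hg1
    simp [hg1] at hg)
  have hp : ∀ n : ℤ, (if n ≤ 0 then z n else z (n - 1) + z n) = y n := by
    intro n; rw [← nucaA_eq, hσz]
  have hz0 : z 0 = 0 := by have := hp 0; simpa [hy] using this
  have key : ∀ m : ℕ, z (1 + m) = 1 := by
    intro m
    induction m with
    | zero =>
      have := hp 1
      simp only [hy, show ¬ ((1:ℤ) ≤ 0) by omega, if_neg, if_pos] at this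
      rw [show (1:ℤ) - 1 = 0 by ring, hz0, zero_add] at this
      simpa using this
    | succ m ih =>
      have h2 := hp (1 + (m + 1 : ℕ))
      have hne : ¬ ((1 + ((m : ℤ) + 1)) ≤ 0) := by omega
      push_cast at h2 ⊢
      rw [if_neg (by omega : ¬ ((1 + ((m:ℤ) + 1)) ≤ 0))] at h2
      rw [show (1 + ((m:ℤ) + 1)) - 1 = 1 + (m:ℤ) by ring] at h2
      rw [ih] at h2
      have hyv : y (1 + ((m:ℤ) + 1)) = 0 := by simp [hy]; omega
      rw [hyv] at h2
      exact (char2_eq_of_add_eq_zero h2).symm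
  have hinf : Set.Infinite {g : ℤ | z g ≠ (0 : ℤ → ZMod 2) g} := by
    apply Set.infinite_of_injective_forall_mem (f := fun m : ℕ => (1 + m : ℤ))
    · intro a b hab; simpa using hab
    · intro m; simp only [Set.mem_setOf_eq, Pi.zero_apply, key m]; decide
  exact hinf hz

abbrev D2 := Module.Dual (ZMod 2) (ZMod 2)

lemma preInjB : PreInjective (nucaMapZ (-({-1, 0} : Finset ℤ)) (dualCoeffZ sEx)) := by
  intro ω ω' hA hEq
  have hp : ∀ g : ℤ, (if g < 0 then ω g else ω g + ω (g + 1)) =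
      (if g < 0 then ω' g else ω' g + ω' (g + 1)) := by
    intro g; rw [← nucaB_eq, ← nucaB_eq, hEq]
  set d : ℤ → D2 := fun g => ω g - ω' g with hd
  have hneg : ∀ g : ℤ, g < 0 → d g = 0 := by
    intro g hg
    have := hp g
    rw [if_pos hg, if_pos hg] at this
    simp [hd, this]
  have hstep : ∀ g : ℤ, 0 ≤ g → d g = d (g + 1) := by
    intro g hg
    have h := hp g
    rw [if_neg (by omega), if_neg (by omega)] at h
    apply char2_eq_of_add_eq_zero
    have : d g + d (g + 1) = (ω g + ω (g + 1)) - (ω' g + ω' (g + 1)) := by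
      simp only [hd]; abel
    rw [this, h, sub_self]
  have key : ∀ m : ℕ, d (m : ℤ) = d 0 := by
    intro m
    induction m with
    | zero => norm_num
    | succ m ih =>
      rw [← ih]
      push_cast
      exact (hstep m (by positivity)).symm
  have hd0 : d 0 = 0 := by
    by_contra hne
    have hinf : Set.Infinite {g : ℤ | ω g ≠ ω' g} := by
      apply Set.infinite_of_injective_forall_mem (f := fun m : ℕ => (m : ℤ))
      · intro a b hab; simpa using hab
      · intro m
        simp only [Set.mem_setOf_eq]
        rw [← sub_ne_zero]
        rw [show ω (m : ℤ) - ω' (m : ℤ) = d (m : ℤ) from rfl, key m]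
        exact hne
    exact hinf hA
  funext g
  by_cases hg : g < 0
  · have := hp g; rw [if_pos hg, if_pos hg] at this; exact this
  · push_neg at hg
    have : d g = 0 := by
      rw [show g = ((g.toNat : ℕ) : ℤ) by omega, key, hd0]
    rwa [hd, sub_eq_zero] at this

lemma postSurjB : PostSurjective (nucaMapZ (-({-1, 0} : Finset ℤ)) (dualCoeffZ sEx)) := by
  intro ω y hA
  set τ := nucaMapZ (-({-1, 0} : Finset ℤ)) (dualCoeffZ sEx) with hτ
  set d : ℤ → D2 := fun g => y g - τ ω g with hd
  have hdfin : Set.Finite {g : ℤ | d g ≠ 0} := by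
    apply hA.subset
    intro g hg
    simp only [Set.mem_setOf_eq, hd, sub_ne_zero] at hg ⊢
    exact hg
  obtain ⟨N, hN⟩ := hdfin.bddAbove
  have hdz : ∀ g : ℤ, N < g → d g = 0 := by
    intro g hg
    by_contra hne
    exact absurd (hN hne) (by omega)
  set e : ℤ → D2 := fun g => if g < 0 then d g else ∑ k ∈ Finset.Icc g N, d k with he
  have hτe : τ e = d := by
    funext g
    rw [hτ, nucaB_eq]
    by_cases hg : g < 0
    · simp [he, hg]
    · push_neg at hg
      rw [if_neg (by omega)]
      have hgg : ¬ (g + 1 < 0) := by omega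
      simp only [he, if_neg (not_lt.mpr hg), if_neg hgg]
      by_cases hgN : g ≤ N
      · have hins : Finset.Icc g N = insert g (Finset.Icc (g + 1) N) := by
          ext a; simp only [Finset.mem_Icc, Finset.mem_insert]; omega
        rw [hins, Finset.sum_insert (by simp only [Finset.mem_Icc]; omega)]
        rw [add_assoc, two_torsion, add_zero]
      · rw [Finset.Icc_eq_empty (by omega), Finset.Icc_eq_empty (by omega)]
        simp only [Finset.sum_empty, add_zero]
        exact (hdz g (by omega)).symm
  refine ⟨ω + e, ?_, ?_⟩
  · apply Set.Finite.subset (hdfin.union (Set.finite_Icc (0 : ℤ) N))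
    intro g hg
    simp only [Set.mem_setOf_eq, Pi.add_apply, ne_eq] at hg
    have hge : e g ≠ 0 := by
      intro h; apply hg; rw [h, add_zero]
    simp only [Set.mem_union, Set.mem_setOf_eq, Set.mem_Icc]
    by_cases hgn : g < 0
    · left; simpa [he, hgn] using hge
    · right
      constructor
      · omega
      · by_contra hNg
        apply hge
        simp only [he, if_neg hgn]
        rw [Finset.Icc_eq_empty (by omega), Finset.sum_empty]
  · rw [hτ] at *
    rw [nuca_add]
    rw [hτe]
    funext g
    simp only [Pi.add_apply, hd]
    abel

lemma notInjB : ¬ Function.Injective (nucaMapZ (-({-1, 0} : Finset ℤ)) (dualCoeffZ sEx)) := by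
  intro H
  set ω : ℤ → D2 := fun g => if 0 ≤ g then (LinearMap.id : ZMod 2 →ₗ[ZMod 2] ZMod 2) else 0 with hω
  have hτω : nucaMapZ (-({-1, 0} : Finset ℤ)) (dualCoeffZ sEx) ω = nucaMapZ (-({-1, 0} : Finset ℤ)) (dualCoeffZ sEx) (0 : ℤ → D2) := by
    rw [nuca_zero]
    funext g
    rw [nucaB_eq]
    by_cases hg : g < 0
    · simp [hω, hg, show ¬ (0 ≤ g) by omega]
    · rw [if_neg hg]
      simp only [hω, if_pos (by omega : (0:ℤ) ≤ g), if_pos (by omega : (0:ℤ) ≤ g + 1)]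
      rw [two_torsion]
      rfl
  have h0 := H hτω
  have h00 : ω 0 = 0 := by rw [h0]; rfl
  simp only [hω, if_pos (le_refl (0:ℤ))] at h00
  have := LinearMap.congr_fun h00 (1 : ZMod 2)
  simp at this

/-- For `A = ℤ/2ℤ`, `G = ℤ`, `M = {-1,0}` and the above `s` (so `σ_s(x)(n) = x(n)`
for `n ≤ 0` and `σ_s(x)(n) = x(n-1) + x(n)` for `n ≥ 1`): (a) `σ_s` is bijective but
not post-surjective; (b) the dual NUCA `σ_{s*}` (with memory `-M = {0,1}`) is
pre-injective and post-surjective but not injective. -/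
theorem stmt18 :
    (Function.Bijective (nucaMapZ ({-1, 0} : Finset ℤ) sEx) ∧
      ¬ PostSurjective (nucaMapZ ({-1, 0} : Finset ℤ) sEx)) ∧
    (PreInjective (nucaMapZ (-({-1, 0} : Finset ℤ)) (dualCoeffZ sEx)) ∧
      PostSurjective (nucaMapZ (-({-1, 0} : Finset ℤ)) (dualCoeffZ sEx)) ∧
      ¬ Function.Injective (nucaMapZ (-({-1, 0} : Finset ℤ)) (dualCoeffZ sEx))) := by
  exact ⟨⟨Function.bijective_iff_has_inverse.mpr ⟨invA, fun x => left_inv_A x, fun y => right_inv_A y⟩, notPostA⟩, preInjB, postSurjB, notInjB⟩
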